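/- Let G be a finite connected graph with n vertices and m edges, and let 𝖡 ∈ ℝ^{n×m} be a matrix whose sparsity pattern matches the incidence structure of G (column j has nonzero entries only in the rows of the endpoints of edge j), with at least one column j₀ having exactly one nonzero entry (a boundary edge). If T is a spanning tree of G rooted at the endpoint of edge j₀ and J is the set of the n−1 tree edges together with j₀, then the square submatrix of 𝖡 formed by the columns indexed by J is invertible. -/

import Mathlib

private lemma aux_mem_support_dist_lt {V : Type*} [DecidableEq V] {T : SimpleGraph V} {i₀ v w : V}
    (q : T.Walk i₀ v) (hw : w ∈ q.support) (hne : w ≠ v) :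
    T.dist i₀ w < q.length := by
  have h1 : T.dist i₀ w ≤ (q.takeUntil w hw).length := SimpleGraph.dist_le _
  have h2 := congrArg SimpleGraph.Walk.length (q.take_spec hw)
  rw [SimpleGraph.Walk.length_append] at h2
  have h3 : (q.dropUntil w hw).length ≠ 0 := fun h0 =>
    hne (SimpleGraph.Walk.eq_of_length_eq_zero h0)
  omega

private lemma aux_ext_path {V : Type*} {T : SimpleGraph V} {i₀ a b : V}
    (p : T.Walk i₀ a) (hp : p.IsPath) (hab : T.Adj a b) (hbp : b ∉ p.support) :
    ∃ q : T.Walk i₀ b, q.IsPath ∧ q.length = p.length + 1 ∧ a ∈ q.support ∧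
      ∀ w ∈ q.support, w = b ∨ w ∈ p.support := by
  refine ⟨(SimpleGraph.Walk.cons hab.symm p.reverse).reverse, ?_, ?_, ?_, ?_⟩
  · apply SimpleGraph.Walk.IsPath.reverse
    rw [SimpleGraph.Walk.cons_isPath_iff]
    exact ⟨hp.reverse, by
      rw [SimpleGraph.Walk.support_reverse, List.mem_reverse]; exact hbp⟩
  · simp
  · rw [SimpleGraph.Walk.support_reverse, List.mem_reverse,
      SimpleGraph.Walk.support_cons]
    exact List.mem_cons_of_mem _
      (by rw [SimpleGraph.Walk.support_reverse, List.mem_reverse]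
          exact p.end_mem_support)
  · intro w hw
    rw [SimpleGraph.Walk.support_reverse, List.mem_reverse,
      SimpleGraph.Walk.support_cons, List.mem_cons] at hw
    rcases hw with h | h
    · exact Or.inl h
    · rw [SimpleGraph.Walk.support_reverse, List.mem_reverse] at h
      exact Or.inr h

/-- In a tree, two adjacent vertices have different distances to any root. -/
private lemma aux_adj_dist_ne {V : Type*} [DecidableEq V] {T : SimpleGraph V} (hT : T.IsTree) (i₀ : V)
    {a b : V} (hab : T.Adj a b) : T.dist i₀ a ≠ T.dist i₀ b := by
  intro he
  obtain ⟨p, hp, hplen⟩ := hT.isConnected.exists_path_of_dist i₀ a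
  by_cases hb : b ∈ p.support
  · have := aux_mem_support_dist_lt p hb hab.ne'
    omega
  · obtain ⟨q, hq, hqlen, -, -⟩ := aux_ext_path p hp hab hb
    obtain ⟨r, hr, hrlen⟩ := hT.isConnected.exists_path_of_dist i₀ b
    have hqr : q = r := (hT.existsUnique_path i₀ b).unique hq hr
    rw [hqr] at hqlen
    omega

/-- In a tree, a vertex has a unique neighbour strictly closer to the root. -/
private lemma aux_unique_parent {V : Type*} [DecidableEq V] {T : SimpleGraph V} (hT : T.IsTree) {i₀ a b c : V}
    (hab : T.Adj a b) (hcb : T.Adj c b)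
    (ha : T.dist i₀ a < T.dist i₀ b) (hc : T.dist i₀ c < T.dist i₀ b) : a = c := by
  by_contra hac
  obtain ⟨p, hp, hplen⟩ := hT.isConnected.exists_path_of_dist i₀ a
  obtain ⟨p', hp', hplen'⟩ := hT.isConnected.exists_path_of_dist i₀ c
  have hbp : b ∉ p.support := by
    intro h
    have := aux_mem_support_dist_lt p h hab.ne'
    omega
  have hbp' : b ∉ p'.support := by
    intro h
    have := aux_mem_support_dist_lt p' h hcb.ne'
    omega
  obtain ⟨P, hP, hPlen, haP, hPsub⟩ := aux_ext_path p hp hab hbp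
  obtain ⟨Q, hQ, hQlen, hcQ, hQsub⟩ := aux_ext_path p' hp' hcb hbp'
  have hPQ : P = Q := (hT.existsUnique_path i₀ b).unique hP hQ
  have haQ : a ∈ Q.support := hPQ ▸ haP
  have hcP : c ∈ P.support := hPQ ▸ hcQ
  have h1 : T.dist i₀ a < T.dist i₀ c := by
    rcases hQsub a haQ with h | h
    · exact absurd h hab.ne
    · have := aux_mem_support_dist_lt p' h hac
      omega
  have h2 : T.dist i₀ c < T.dist i₀ a := by
    rcases hPsub c hcP with h | h
    · exact absurd h hcb.ne
    · have := aux_mem_support_dist_lt p h (Ne.symm hac)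
      omega
  omega

/-- Spanning-tree solve: the submatrix of the (divergence/incidence-pattern)
matrix `B` given by the columns of a spanning tree together with one boundary
column `j₀` is invertible, i.e. the corresponding linear map is bijective. -/
theorem spanning_tree_submatrix_invertible
    (n m : ℕ) (B : Matrix (Fin n) (Fin m) ℝ)
    (ends : Fin m → Sym2 (Fin n))
    (G : SimpleGraph (Fin n)) (hG : G.Connected)
    (hedges : ∀ j : Fin m, ¬ (ends j).IsDiag → ends j ∈ G.edgeSet)
    (j₀ : Fin m) (i₀ : Fin n)
    (hj₀ : ends j₀ = s(i₀, i₀))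
    (hsparsity : ∀ i j, B i j ≠ 0 ↔ i ∈ ends j)
    (J : Finset (Fin m)) (hj₀J : j₀ ∈ J) (hcard : J.card = n)
    (htree : (SimpleGraph.fromEdgeSet (ends '' ↑(J.erase j₀))).IsTree) :
    Function.Bijective
      (fun x : {j // j ∈ J} → ℝ => fun i : Fin n => ∑ j : {j // j ∈ J}, B i j * x j) := by
  classical
  set T := SimpleGraph.fromEdgeSet (ends '' ↑(J.erase j₀)) with hT
  set S := J.erase j₀ with hSdef
  have hconn : T.Connected := htree.isConnected
  have hn1 : 1 ≤ n := by
    have := Finset.card_pos.mpr ⟨j₀, hj₀J⟩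
    omega
  have hScard : S.card = n - 1 := by
    rw [hSdef, Finset.card_erase_of_mem hj₀J, hcard]
  -- edge set of T
  have hfin : T.edgeSet.Finite := by
    rw [hT, SimpleGraph.edgeSet_fromEdgeSet]
    exact (S.finite_toSet.image ends).diff
  haveI : Fintype T.edgeSet := hfin.fintype
  have hFcard : T.edgeFinset.card = n - 1 := by
    have := htree.card_edgeFinset
    rw [Fintype.card_fin] at this
    omega
  have hsubF : T.edgeFinset ⊆ S.image ends := by
    intro e he
    rw [SimpleGraph.mem_edgeFinset, hT, SimpleGraph.edgeSet_fromEdgeSet] at he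
    obtain ⟨j, hj, rfl⟩ := he.1
    exact Finset.mem_image_of_mem ends hj
  have hFeq : T.edgeFinset = S.image ends := by
    apply Finset.eq_of_subset_of_card_le hsubF
    calc (S.image ends).card ≤ S.card := Finset.card_image_le
      _ = T.edgeFinset.card := by rw [hScard, hFcard]
  have hinjS : Set.InjOn ends ↑S := by
    apply Finset.injOn_of_card_image_eq
    rw [← hFeq, hFcard, hScard]
  have hedgeS : ∀ j ∈ S, ends j ∈ T.edgeSet := by
    intro j hj
    rw [← SimpleGraph.mem_edgeFinset, hFeq]
    exact Finset.mem_image_of_mem ends hj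
  have hadjS : ∀ j ∈ S, ∀ a b : Fin n, ends j = s(a, b) → T.Adj a b := by
    intro j hj a b hab
    have := hedgeS j hj
    rw [hab] at this
    exact this
  have hdlt : ∀ v : Fin n, T.dist i₀ v < n := by
    intro v
    obtain ⟨p, hp, hl⟩ := hconn.exists_path_of_dist i₀ v
    have := hp.length_lt
    rw [Fintype.card_fin] at this
    omega
  have hdadj : ∀ a b : Fin n, T.Adj a b → T.dist i₀ b ≤ T.dist i₀ a + 1 := by
    intro a b hab
    have h1 : T.dist i₀ b ≤ T.dist i₀ a + T.dist a b := hconn.dist_triangle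
    have h2 : T.dist a b = 1 := SimpleGraph.dist_eq_one_iff_adj.mpr hab
    omega
  -- injectivity
  have hker : ∀ x : {j // j ∈ J} → ℝ,
      (∀ i : Fin n, ∑ j : {j // j ∈ J}, B i j * x j = 0) → x = 0 := by
    intro x hx
    have key : ∀ N : ℕ, ∀ (j : {j // j ∈ J}) (a b : Fin n), (j : Fin m) ≠ j₀ →
        ends (j : Fin m) = s(a, b) → T.dist i₀ a < T.dist i₀ b →
        n - T.dist i₀ b = N → x j = 0 := by
      intro N
      induction N using Nat.strong_induction_on with
      | _ N ih =>
        intro j a b hjne hends hlt hN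
        have hjS : (j : Fin m) ∈ S := Finset.mem_erase.mpr ⟨hjne, j.2⟩
        have hadjab : T.Adj a b := hadjS _ hjS a b hends
        have hbne : b ≠ i₀ := by
          intro h
          rw [h, SimpleGraph.dist_self] at hlt
          omega
        have hrow := hx b
        have hterm : ∀ j' : {j // j ∈ J}, j' ≠ j → B b (j' : Fin m) * x j' = 0 := by
          intro j' hj'ne
          by_cases hmem : b ∈ ends (j' : Fin m)
          · by_cases hj'0 : (j' : Fin m) = j₀
            · exfalso
              rw [hj'0, hj₀] at hmem
              rcases Sym2.mem_iff.mp hmem with h | h <;> exact hbne h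
            · have hj'S : (j' : Fin m) ∈ S := Finset.mem_erase.mpr ⟨hj'0, j'.2⟩
              obtain ⟨c, hc⟩ := Sym2.mem_iff_exists.mp hmem
              have hadjbc : T.Adj b c := hadjS _ hj'S b c hc
              have hdne : T.dist i₀ b ≠ T.dist i₀ c := aux_adj_dist_ne htree i₀ hadjbc
              rcases lt_or_gt_of_ne hdne with hlt' | hgt'
              · -- c is deeper: apply IH
                have hdc : T.dist i₀ c ≤ T.dist i₀ b + 1 := hdadj b c hadjbc
                have hcn : T.dist i₀ c < n := hdlt c
                have hxj' : x j' = 0 := by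
                  apply ih (n - T.dist i₀ c) (by omega) j' b c hj'0 hc hlt' rfl
                rw [hxj', mul_zero]
              · -- c is a parent of b, as is a: contradiction
                exfalso
                have hac : a = c :=
                  aux_unique_parent htree hadjab hadjbc.symm hlt hgt'
                have : ends (j : Fin m) = ends (j' : Fin m) := by
                  rw [hends, hc, hac, Sym2.eq_swap]
                have : (j : Fin m) = (j' : Fin m) := hinjS hjS hj'S this
                exact hj'ne (Subtype.ext this.symm)
          · have : B b (j' : Fin m) = 0 := by
              by_contra h
              exact hmem ((hsparsity b j').mp h)
            rw [this, zero_mul]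
        have hsum : ∑ j' : {j // j ∈ J}, B b (j' : Fin m) * x j'
            = B b (j : Fin m) * x j := by
          apply Finset.sum_eq_single j
          · intro j' _ hne
            exact hterm j' hne
          · intro h
            exact absurd (Finset.mem_univ j) h
        rw [hsum] at hrow
        have hBbj : B b (j : Fin m) ≠ 0 := by
          rw [hsparsity, hends]
          exact Sym2.mem_mk_right a b
        exact (mul_eq_zero.mp hrow).resolve_left hBbj
    -- conclude every coordinate vanishes
    have hxj₀ : ∀ j : {j // j ∈ J}, (j : Fin m) = j₀ → x j = 0 := by
      intro j hj
      have hrow := hx i₀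
      have hterm : ∀ j' : {j // j ∈ J}, j' ≠ j → B i₀ (j' : Fin m) * x j' = 0 := by
        intro j' hj'ne
        by_cases hmem : i₀ ∈ ends (j' : Fin m)
        · have hj'0 : (j' : Fin m) ≠ j₀ := by
            intro h
            exact hj'ne (Subtype.ext (h.trans hj.symm))
          have hj'S : (j' : Fin m) ∈ S := Finset.mem_erase.mpr ⟨hj'0, j'.2⟩
          obtain ⟨c, hc⟩ := Sym2.mem_iff_exists.mp hmem
          have hadj : T.Adj i₀ c := hadjS _ hj'S i₀ c hc
          have hpos : 0 < T.dist i₀ c :=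
            hconn.pos_dist_of_ne hadj.ne
          have hxj' : x j' = 0 := by
            apply key (n - T.dist i₀ c) j' i₀ c hj'0 hc
              (by rw [SimpleGraph.dist_self]; omega) rfl
          rw [hxj', mul_zero]
        · have : B i₀ (j' : Fin m) = 0 := by
            by_contra h
            exact hmem ((hsparsity i₀ j').mp h)
          rw [this, zero_mul]
      have hsum : ∑ j' : {j // j ∈ J}, B i₀ (j' : Fin m) * x j'
          = B i₀ (j : Fin m) * x j := by
        apply Finset.sum_eq_single j
        · intro j' _ hne
          exact hterm j' hne
        · intro h
          exact absurd (Finset.mem_univ j) h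
      rw [hsum] at hrow
      have hBij : B i₀ (j : Fin m) ≠ 0 := by
        rw [hsparsity, hj, hj₀]
        exact Sym2.mem_mk_left i₀ i₀
      exact (mul_eq_zero.mp hrow).resolve_left hBij
    funext j
    show x j = 0
    by_cases hj : (j : Fin m) = j₀
    · exact hxj₀ j hj
    · have hjS : (j : Fin m) ∈ S := Finset.mem_erase.mpr ⟨hj, j.2⟩
      obtain ⟨a, ha⟩ := Sym2.mem_iff_exists.mp (Sym2.out_fst_mem (ends (j : Fin m)))
      set b := (ends (j : Fin m)).out.1
      have hadj : T.Adj b a := hadjS _ hjS b a ha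
      have hdne : T.dist i₀ b ≠ T.dist i₀ a := aux_adj_dist_ne htree i₀ hadj
      rcases lt_or_gt_of_ne hdne with hlt | hgt
      · exact key (n - T.dist i₀ a) j b a hj ha hlt rfl
      · exact key (n - T.dist i₀ b) j a b hj (by rw [ha, Sym2.eq_swap]) hgt rfl
  -- wrap up: linear map, injective, same finrank ⇒ bijective
  let M : Matrix (Fin n) {j // j ∈ J} ℝ := Matrix.of fun i j => B i (j : Fin m)
  have hfun : (fun x : {j // j ∈ J} → ℝ => fun i : Fin n =>
      ∑ j : {j // j ∈ J}, B i j * x j) = ⇑(M.mulVecLin) := by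
    funext x i
    simp [M, Matrix.mulVecLin_apply, Matrix.mulVec, dotProduct]
  rw [hfun]
  have hinj : Function.Injective M.mulVecLin := by
    rw [injective_iff_map_eq_zero]
    intro x hx0
    apply hker x
    intro i
    have := congrFun hx0 i
    simpa [M, Matrix.mulVecLin_apply, Matrix.mulVec, dotProduct] using this
  have hfr : Module.finrank ℝ ({j // j ∈ J} → ℝ) = Module.finrank ℝ (Fin n → ℝ) := by
    rw [Module.finrank_pi, Module.finrank_pi, Fintype.card_coe, hcard, Fintype.card_fin]
  exact ⟨hinj,
    (LinearMap.injective_iff_surjective_of_finrank_eq_finrank hfr).mp hinj⟩
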